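/- In the deterministic comparison setting below, suppose Q_0^L(s,a) ≤ Q_0^{Boltz}(s,a) for all (s,a) ∈ S×A. Then for all k ≥ 0 and all (s,a), Q_k^L(s,a) ≤ Q_k^{Boltz}(s,a). -/

import Mathlib

lemma boltz_lb {A : Type*} [Fintype A] [Nonempty A] {β : ℝ} (hβ : 0 < β) (v : A → ℝ) :
    Finset.univ.sup' Finset.univ_nonempty v - Real.log (Fintype.card A) / β ≤
      (∑ b, v b * Real.exp (β * v b)) / (∑ b, Real.exp (β * v b)) := by
  set n : ℝ := (Fintype.card A : ℝ) with hn
  have hnpos : 0 < n := Nat.cast_pos.mpr Fintype.card_pos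
  set Z := ∑ b, Real.exp (β * v b) with hZ
  have hZpos : 0 < Z := Finset.sum_pos (fun b _ => Real.exp_pos _) Finset.univ_nonempty
  set M := Finset.univ.sup' Finset.univ_nonempty v with hM
  obtain ⟨b0, -, hb0⟩ := Finset.exists_mem_eq_sup' (Finset.univ_nonempty (α := A)) v
  have hZM : Real.exp (β * M) ≤ Z := by
    rw [hM, hb0]
    exact Finset.single_le_sum (f := fun b => Real.exp (β * v b))
      (fun b _ => (Real.exp_pos _).le) (Finset.mem_univ b0)
  have hlogZ : β * M ≤ Real.log Z := (Real.le_log_iff_exp_le hZpos).2 hZM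
  set c := Z / n with hc
  have hcpos : 0 < c := div_pos hZpos hnpos
  have key : ∀ b : A, Real.exp (β * v b) * Real.log c + Real.exp (β * v b) - c ≤
      Real.exp (β * v b) * (β * v b) := by
    intro b
    have ht : 0 < Real.exp (β * v b) := Real.exp_pos _
    have h1 := Real.log_le_sub_one_of_pos (div_pos hcpos ht)
    rw [Real.log_div hcpos.ne' ht.ne', Real.log_exp] at h1
    have h2 := mul_le_mul_of_nonneg_left h1 ht.le
    have h3 : Real.exp (β * v b) * (c / Real.exp (β * v b)) = c := by
      field_simp
    nlinarith [h2, ht]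
  have hsum : Z * Real.log c + Z - n * c ≤ β * ∑ b, v b * Real.exp (β * v b) := by
    have h1 := Finset.sum_le_sum (fun b (_ : b ∈ Finset.univ) => key b)
    have e1 : ∑ b : A, (Real.exp (β * v b) * Real.log c + Real.exp (β * v b) - c) =
        Z * Real.log c + Z - n * c := by
      rw [Finset.sum_sub_distrib, Finset.sum_add_distrib, ← Finset.sum_mul, Finset.sum_const]
      simp [hn, mul_comm, hZ]
    have e2 : ∑ b : A, Real.exp (β * v b) * (β * v b) =
        β * ∑ b, v b * Real.exp (β * v b) := by
      rw [Finset.mul_sum]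
      exact Finset.sum_congr rfl fun b _ => by ring
    rw [e1, e2] at h1
    exact h1
  have hnc : n * c = Z := by
    rw [hc, mul_div_assoc', mul_comm, mul_div_assoc, div_self hnpos.ne', mul_one]
  have hlogc : Real.log c = Real.log Z - Real.log n := Real.log_div hZpos.ne' hnpos.ne'
  rw [le_div_iff₀ hZpos, ← mul_le_mul_iff_right₀ hβ]
  have hexp : β * ((M - Real.log n / β) * Z) = β * (M * Z) - Real.log n * Z := by
    field_simp
  rw [hexp]
  nlinarith [hsum, hnc, hlogc, mul_le_mul_of_nonneg_left hlogZ hZpos.le]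



/-- **Lower comparison system of Boltzmann soft Q-learning.** If the lower comparison
iterates start below the Boltzmann soft Q-learning iterates, they stay below forever. -/
theorem boltzmann_lower_comparison {S A : Type*} [Fintype S] [Fintype A]
    [Nonempty S] [Nonempty A]
    (α γ β : ℝ) (hα : α ∈ Set.Ioo (0 : ℝ) 1) (hγ : γ ∈ Set.Ico (0 : ℝ) 1) (hβ : 0 < β)
    (P : S → A → S → ℝ) (hP0 : ∀ s a s', 0 ≤ P s a s') (hP1 : ∀ s a, ∑ s', P s a s' = 1)
    (R : S → A → ℝ)
    (Qstar : S → A → ℝ)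
    (hBell : ∀ s a, Qstar s a = R s a + γ * ∑ s', P s a s' *
      (Finset.univ.sup' Finset.univ_nonempty fun b => Qstar s' b))
    (d : S → A → ℝ) (hd : ∀ s a, d s a ∈ Set.Ioo (0 : ℝ) 1)
    (pi : S → A)
    (hpi : ∀ s, Qstar s (pi s) = Finset.univ.sup' Finset.univ_nonempty fun b => Qstar s b)
    (w : ℕ → S → A → ℝ)
    (QB : ℕ → S → A → ℝ)
    (hBrec : ∀ k s a, QB (k + 1) s a = QB k s a +
      α * (d s a * (R s a
          + γ * ∑ s', P s a s' * ((∑ b, QB k s' b * Real.exp (β * QB k s' b)) /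
              (∑ b, Real.exp (β * QB k s' b)))
          - QB k s a)
        + w k s a))
    (QL : ℕ → S → A → ℝ)
    (hLrec : ∀ k s a, QL (k + 1) s a = QL k s a +
      α * (γ * d s a * ∑ s', P s a s' * (QL k s' (pi s') - Qstar s' (pi s'))
        - d s a * (QL k s a - Qstar s a) + w k s a
        - γ * d s a * Real.log (Fintype.card A) / β))
    (h0 : ∀ s a, QL 0 s a ≤ QB 0 s a) :
    ∀ k s a, QL k s a ≤ QB k s a := by
  intro k
  induction k with
  | zero => exact h0
  | succ k ih =>
    intro s a
    obtain ⟨hα0, hα1⟩ := hα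
    obtain ⟨hd0, hd1⟩ := hd s a
    have hγ0 := hγ.1
    set L := Real.log (Fintype.card A) with hLdef
    -- Bellman equation rewritten with the greedy policy
    have hQ : Qstar s a = R s a + γ * ∑ s', P s a s' * Qstar s' (pi s') := by
      rw [hBell s a]
      simp only [← hpi]
    -- pointwise bound on the Boltzmann average
    have hterm : ∀ s', QL k s' (pi s') - L / β ≤
        (∑ b, QB k s' b * Real.exp (β * QB k s' b)) / (∑ b, Real.exp (β * QB k s' b)) := by
      intro s'
      have h1 := boltz_lb (A := A) hβ (QB k s')
      have h2 : QL k s' (pi s') ≤ Finset.univ.sup' Finset.univ_nonempty (QB k s') :=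
        le_trans (ih s' (pi s')) (Finset.le_sup' _ (Finset.mem_univ _))
      calc QL k s' (pi s') - L / β
          ≤ Finset.univ.sup' Finset.univ_nonempty (QB k s') - L / β := by linarith
        _ ≤ _ := h1
    rw [hBrec, hLrec]
    set X := ∑ s', P s a s' * QL k s' (pi s') with hX
    set Y := ∑ s', P s a s' * Qstar s' (pi s') with hY
    set H := ∑ s', P s a s' * ((∑ b, QB k s' b * Real.exp (β * QB k s' b)) /
        (∑ b, Real.exp (β * QB k s' b))) with hH
    have hHsum : X - L / β ≤ H := by
      have h1 : ∑ s', P s a s' * (QL k s' (pi s') - L / β) ≤ H := by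
        rw [hH]
        exact Finset.sum_le_sum fun s' _ =>
          mul_le_mul_of_nonneg_left (hterm s') (hP0 s a s')
      have h2 : ∑ s', P s a s' * (QL k s' (pi s') - L / β) = X - L / β := by
        simp only [mul_sub]
        rw [Finset.sum_sub_distrib, ← Finset.sum_mul, hP1, one_mul, hX]
      linarith
    have hXY : ∑ s', P s a s' * (QL k s' (pi s') - Qstar s' (pi s')) = X - Y := by
      simp only [mul_sub]
      rw [Finset.sum_sub_distrib, hX, hY]
    rw [hXY]
    have hIH := ih s a
    have fact1 : 0 ≤ α * d s a * (γ * (H - X + L / β)) := by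
      apply mul_nonneg (mul_nonneg hα0.le hd0.le)
      apply mul_nonneg hγ0
      linarith
    have fact2 : 0 ≤ (1 - α * d s a) * (QB k s a - QL k s a) := by
      apply mul_nonneg _ (by linarith)
      nlinarith
    have key : QB k s a + α * (d s a * (R s a + γ * H - QB k s a) + w k s a)
        - (QL k s a + α * (γ * d s a * (X - Y) - d s a * (QL k s a - Qstar s a)
            + w k s a - γ * d s a * L / β))
        = α * d s a * (γ * (H - X + L / β))
          + (1 - α * d s a) * (QB k s a - QL k s a) := by
      rw [hQ]
      field_simp
      ring
    linarith [fact1, fact2, key]
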